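/- A compact Hausdorff non-discrete topological group does not admit a transversal group topology. -/

import Mathlib

section Aux

lemma aux_div {G : Type*} [Group G] [TopologicalSpace G] [IsTopologicalGroup G]
    (x : G) (U : Set G) (hU : U ∈ nhds (1 : G)) :
    ∃ O ∈ nhds x, ∀ a ∈ O, ∀ b ∈ O, a⁻¹ * b ∈ U := by
  have hcont : ContinuousAt (fun p : G × G => p.1⁻¹ * p.2) (x, x) := by
    fun_prop
  have h1 : (fun p : G × G => p.1⁻¹ * p.2) (x, x) = 1 := by simp
  have hpre : (fun p : G × G => p.1⁻¹ * p.2) ⁻¹' U ∈ nhds (x, x) := by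
    apply hcont
    rw [h1]; exact hU
  rw [mem_nhds_prod_iff] at hpre
  obtain ⟨O₁, hO₁, O₂, hO₂, hsub⟩ := hpre
  refine ⟨O₁ ∩ O₂, Filter.inter_mem hO₁ hO₂, ?_⟩
  intro a ha b hb
  exact hsub (Set.mk_mem_prod ha.1 hb.2)

lemma aux_infinite {G : Type*} [TopologicalSpace G] [T1Space G]
    (x : G) (hx : nhds x ≠ pure x) (W : Set G) (hW : W ∈ nhds x) : W.Infinite := by
  intro hfin
  have hfin' : (W \ {x}).Finite := hfin.diff
  have hclosed : IsClosed (W \ {x}) := hfin'.isClosed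
  have hmem : (W \ {x})ᶜ ∈ nhds x := hclosed.isOpen_compl.mem_nhds (by simp)
  have hsing : {x} ∈ nhds x := by
    filter_upwards [Filter.inter_mem hW hmem] with y hy
    rcases hy with ⟨hyW, hyc⟩
    by_contra h
    exact hyc ⟨hyW, h⟩
  exact hx (le_antisymm (Filter.le_pure_iff.2 hsing) (pure_le_nhds x))

lemma aux_nondiscrete {G : Type*} [Group G] (σ : TopologicalSpace G)
    [IsTopologicalGroup G] (hnd : σ ≠ ⊥) : nhds (1 : G) ≠ pure 1 := by
  intro h
  apply hnd
  have : DiscreteTopology G := by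
    rw [discreteTopology_iff_nhds]
    intro x
    have := (Homeomorph.mulLeft x).map_nhds_eq (1 : G)
    rw [h] at this
    simpa using this.symm
  exact DiscreteTopology.eq_bot

end Aux

/-- A compact Hausdorff non-discrete topological group does not admit a transversal
group topology: there is no non-discrete Hausdorff group topology `σ` with
`τ ⊓ σ = ⊥` (i.e. whose join with `τ` is the discrete topology). -/
theorem stmt_1 {G : Type*} [Group G] (τ : TopologicalSpace G)
    (hτ : @IsTopologicalGroup G τ _) (hc : @CompactSpace G τ) (hT2 : @T2Space G τ)
    (hnd : τ ≠ ⊥) :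
    ¬ ∃ σ : TopologicalSpace G,
        @IsTopologicalGroup G σ _ ∧ @T2Space G σ ∧ σ ≠ ⊥ ∧ τ ⊓ σ = ⊥ := by
  rintro ⟨σ, hσg, hσT2, hσnd, hinf⟩
  -- {1} is a neighborhood of 1 in the inf topology
  have h1 : ({1} : Set G) ∈ @nhds G τ 1 ⊓ @nhds G σ 1 := by
    rw [← nhds_inf, hinf]
    have hd : @nhds G ⊥ 1 = pure 1 := congrFun (@nhds_discrete G ⊥ (@DiscreteTopology.mk G ⊥ rfl)) 1
    rw [hd]
    exact Filter.mem_pure.2 rfl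
  rw [Filter.mem_inf_iff] at h1
  obtain ⟨U, hU, V, hV, hUV⟩ := h1
  -- shrink V: W ∈ 𝓝σ 1 with W⁻¹ W ⊆ V
  obtain ⟨W, hW, hWV⟩ := @aux_div G _ σ hσg 1 V hV
  -- W is infinite
  have hWinf : W.Infinite :=
    @aux_infinite G σ hσT2.t1Space 1 (@aux_nondiscrete G _ σ hσg hσnd) W hW
  -- accumulation point in compact τ
  obtain ⟨x, hx⟩ := @Set.Infinite.exists_accPt_principal G τ W hc hWinf
  rw [@accPt_iff_nhds G τ] at hx
  -- O ∈ 𝓝τ x with O⁻¹ O ⊆ U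
  obtain ⟨O, hO, hOU⟩ := @aux_div G _ τ hτ x U hU
  obtain ⟨w₁, ⟨hw₁O, hw₁W⟩, hw₁x⟩ := hx O hO
  have hO' : O \ {w₁} ∈ @nhds G τ x := by
    have hcl : @IsClosed G τ ({w₁} : Set G) := @isClosed_singleton G τ (@T2Space.t1Space G τ hT2) w₁
    exact Filter.inter_mem hO (@IsOpen.mem_nhds G τ x _ hcl.isOpen_compl (show x ∈ ({w₁} : Set G)ᶜ from Ne.symm hw₁x))
  obtain ⟨w₂, ⟨⟨hw₂O, hw₂ne⟩, hw₂W⟩, hw₂x⟩ := hx _ hO'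
  have hmemU : w₁⁻¹ * w₂ ∈ U := hOU w₁ hw₁O w₂ hw₂O
  have hmemV : w₁⁻¹ * w₂ ∈ V := hWV w₁ hw₁W w₂ hw₂W
  have : w₁⁻¹ * w₂ ∈ ({1} : Set G) := by rw [hUV]; exact ⟨hmemU, hmemV⟩
  simp only [Set.mem_singleton_iff] at this
  exact hw₂ne (Set.mem_singleton_iff.2 (inv_mul_eq_one.mp this).symm)
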